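/- Let σ = (√5 − 1)/2 and define S_n = σ^(n−3)·((n+1)σ + 1). Then S_6 > 1 and S_7 < 1. -/
import Mathlib


noncomputable def σ : ℝ := (Real.sqrt 5 - 1) / 2

noncomputable def S (n : ℕ) : ℝ := σ ^ ((n : ℤ) - 3) * (((n : ℝ) + 1) * σ + 1)

theorem stmt_11 : S 6 > 1 ∧ S 7 < 1 := by
  have h5 : Real.sqrt 5 ^ 2 = 5 := Real.sq_sqrt (by norm_num)
  have hb : 2 < Real.sqrt 5 := by nlinarith [Real.sqrt_nonneg 5]
  have hub : Real.sqrt 5 < 2.2361 := by nlinarith [Real.sqrt_nonneg 5]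
  constructor
  · show σ ^ ((6:ℤ) - 3) * ((6 + 1) * σ + 1) > 1
    norm_num [σ, zpow_ofNat]
    nlinarith [h5, hb, hub, Real.sqrt_nonneg 5]
  · show σ ^ ((7:ℤ) - 3) * ((7 + 1) * σ + 1) < 1
    norm_num [σ, zpow_ofNat]
    have key : ((Real.sqrt 5 - 1) / 2) ^ 4 * (8 * ((Real.sqrt 5 - 1) / 2) + 1)
        = (37 * Real.sqrt 5 - 81) / 2 := by
      linear_combination (4 * Real.sqrt 5 ^ 3 - 19 * Real.sqrt 5 ^ 2 + 56 * Real.sqrt 5 - 129) / 16 * h5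
    rw [key]
    linarith
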